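/- For any finite alphabets 𝒳 and 𝒴 and any joint probability mass function P_XY on 𝒳×𝒴 with 𝒳-marginal P_X, there exist a finite alphabet 𝒵 with |𝒵| ≤ |𝒳|(|𝒴|−1)+1, a probability mass function P_Z on 𝒵, and a function ξ: 𝒳×𝒵 → 𝒴, such that the pushforward of the product measure P_X ⊗ P_Z under the map (x,z) ↦ (x, ξ(x,z)) equals P_XY; equivalently, if X ∼ P_X and Z ∼ P_Z are independent random variables, then the pair (X, ξ(X,Z)) has joint distribution P_XY. -/

import Mathlib

open Finset

private lemma key_step {𝒳 𝒴 : Type*} [Fintype 𝒳] [Fintype 𝒴] [Nonempty 𝒳] [Nonempty 𝒴]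
    [DecidableEq 𝒴] :
    ∀ (k : ℕ) (Q : 𝒳 → 𝒴 → ℝ) (s : ℝ),
      (∀ x y, 0 ≤ Q x y) → (∀ x, ∑ y, Q x y = s) → 0 ≤ s →
      ((Finset.univ.filter (fun p : 𝒳 × 𝒴 => 0 < Q p.1 p.2)).card ≤ k) →
      ∃ (m : ℕ) (w : Fin m → ℝ) (f : Fin m → 𝒳 → 𝒴),
        m ≤ k + 1 - Fintype.card 𝒳 ∧ (∀ i, 0 ≤ w i) ∧ (∑ i, w i = s) ∧
        ∀ x y, ∑ i ∈ Finset.univ.filter (fun i => f i x = y), w i = Q x y := by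
  classical
  intro k
  induction k with
  | zero =>
    intro Q s hQ0 hrow hs hcard
    rcases eq_or_lt_of_le hs with hs0 | hs0
    · refine ⟨0, Fin.elim0, Fin.elim0, by omega, fun i => i.elim0, by simp [← hs0], ?_⟩
      intro x y
      have h0 : ∑ y, Q x y = 0 := by rw [hrow x, ← hs0]
      have := (Finset.sum_eq_zero_iff_of_nonneg (fun y _ => hQ0 x y)).1 h0 y (mem_univ y)
      simp [this]
    · exfalso
      set x := Classical.arbitrary 𝒳
      have hpos : ∃ y, 0 < Q x y := by
        by_contra h
        push_neg at h
        have : ∑ y, Q x y = 0 := Finset.sum_eq_zero fun y _ => le_antisymm (h y) (hQ0 x y)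
        rw [hrow x] at this
        exact hs0.ne this.symm
      obtain ⟨y, hy⟩ := hpos
      have : (x, y) ∈ Finset.univ.filter (fun p : 𝒳 × 𝒴 => 0 < Q p.1 p.2) := by
        simp [hy]
      have := Finset.card_pos.2 ⟨_, this⟩
      omega
  | succ k ih =>
    intro Q s hQ0 hrow hs hcard
    rcases eq_or_lt_of_le hs with hs0 | hs0
    · refine ⟨0, Fin.elim0, Fin.elim0, by omega, fun i => i.elim0, by simp [← hs0], ?_⟩
      intro x y
      have h0 : ∑ y, Q x y = 0 := by rw [hrow x, ← hs0]
      have := (Finset.sum_eq_zero_iff_of_nonneg (fun y _ => hQ0 x y)).1 h0 y (mem_univ y)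
      simp [this]
    · -- each row has a positive entry
      have hpos : ∀ x, ∃ y, 0 < Q x y := by
        intro x
        by_contra h
        push_neg at h
        have : ∑ y, Q x y = 0 := Finset.sum_eq_zero fun y _ => le_antisymm (h y) (hQ0 x y)
        rw [hrow x] at this
        exact hs0.ne this.symm
      choose g hg using hpos
      -- cardinality lower bound: card 𝒳 ≤ number of positive entries
      have hginj : Fintype.card 𝒳 ≤
          (Finset.univ.filter (fun p : 𝒳 × 𝒴 => 0 < Q p.1 p.2)).card := by
        rw [← Finset.card_univ]
        apply Finset.card_le_card_of_injOn (fun x => (x, g x))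
        · intro x _; simp [hg x]
        · intro a _ b _ hab
          exact congrArg Prod.fst hab
      obtain ⟨x₀, -, hx₀⟩ := Finset.exists_min_image Finset.univ (fun x => Q x (g x))
        Finset.univ_nonempty
      set ε := Q x₀ (g x₀) with hεdef
      have hε : 0 < ε := hg x₀
      have hεs : ε ≤ s := by
        calc ε ≤ ∑ y, Q x₀ y :=
              Finset.single_le_sum (fun y _ => hQ0 x₀ y) (mem_univ _)
          _ = s := hrow x₀
      set Q' : 𝒳 → 𝒴 → ℝ := fun x y => Q x y - if g x = y then ε else 0 with hQ'def
      have hQ'0 : ∀ x y, 0 ≤ Q' x y := by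
        intro x y
        by_cases h : g x = y
        · simp only [hQ'def, if_pos h, sub_nonneg]
          subst h
          exact hx₀ x (mem_univ x)
        · simp [hQ'def, if_neg h, hQ0 x y]
      have hQ'row : ∀ x, ∑ y, Q' x y = s - ε := by
        intro x
        simp only [hQ'def]
        rw [Finset.sum_sub_distrib, hrow x, Finset.sum_ite_eq]
        simp
      have hQ'le : ∀ x y, Q' x y ≤ Q x y := by
        intro x y
        simp only [hQ'def]
        by_cases h : g x = y <;> simp [h, hε.le]
      have hsub : (Finset.univ.filter (fun p : 𝒳 × 𝒴 => 0 < Q' p.1 p.2)) ⊆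
          (Finset.univ.filter (fun p : 𝒳 × 𝒴 => 0 < Q p.1 p.2)).erase (x₀, g x₀) := by
        intro p hp
        rw [Finset.mem_filter] at hp
        rw [Finset.mem_erase, Finset.mem_filter]
        refine ⟨?_, mem_univ _, lt_of_lt_of_le hp.2 (hQ'le _ _)⟩
        rintro rfl
        have : Q' x₀ (g x₀) = 0 := by simp [hQ'def, ← hεdef]
        rw [this] at hp
        exact lt_irrefl 0 hp.2
      have hmem : (x₀, g x₀) ∈ Finset.univ.filter (fun p : 𝒳 × 𝒴 => 0 < Q p.1 p.2) := by
        simp [hg x₀]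
      have hcard' : (Finset.univ.filter (fun p : 𝒳 × 𝒴 => 0 < Q' p.1 p.2)).card ≤ k := by
        have h1 := Finset.card_le_card hsub
        have h2 := Finset.card_erase_of_mem hmem
        omega
      obtain ⟨m', w', f', hm', hw0', hwsum', hrep'⟩ :=
        ih Q' (s - ε) hQ'0 hQ'row (by linarith) hcard'
      refine ⟨m' + 1, Fin.cons ε w', Fin.cons g f', by omega, ?_, ?_, ?_⟩
      · intro i
        induction i using Fin.cases with
        | zero => simpa using hε.le
        | succ j => simpa using hw0' j
      · rw [Fin.sum_cons, hwsum']; ring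
      · intro x y
        rw [Finset.sum_filter, Fin.sum_univ_succ]
        simp only [Fin.cons_zero, Fin.cons_succ]
        rw [← Finset.sum_filter, hrep' x y]
        simp only [hQ'def]
        by_cases h : g x = y <;> simp [h]

theorem stmt_0 {𝒳 𝒴 : Type*} [Fintype 𝒳] [Fintype 𝒴] [DecidableEq 𝒴]
    (PXY : 𝒳 × 𝒴 → ℝ)
    (hPXY0 : ∀ p, 0 ≤ PXY p) (hPXY1 : ∑ p : 𝒳 × 𝒴, PXY p = 1)
    (PX : 𝒳 → ℝ) (hPX : ∀ x, PX x = ∑ y : 𝒴, PXY (x, y)) :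
    ∃ (m : ℕ) (PZ : Fin m → ℝ) (ξ : 𝒳 × Fin m → 𝒴),
      m ≤ Fintype.card 𝒳 * (Fintype.card 𝒴 - 1) + 1 ∧
      (∀ z, 0 ≤ PZ z) ∧ (∑ z, PZ z = 1) ∧
      (∀ x y, ∑ z ∈ Finset.univ.filter (fun z => ξ (x, z) = y), PX x * PZ z = PXY (x, y)) := by
  haveI : Nonempty (𝒳 × 𝒴) := by
    by_contra h
    rw [not_nonempty_iff] at h
    simp at hPXY1
  haveI : Nonempty 𝒳 := ⟨(Classical.arbitrary (𝒳 × 𝒴)).1⟩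
  haveI : Nonempty 𝒴 := ⟨(Classical.arbitrary (𝒳 × 𝒴)).2⟩
  set y₀ := Classical.arbitrary 𝒴
  have hPXnn : ∀ x, 0 ≤ PX x := by
    intro x
    rw [hPX x]
    exact Finset.sum_nonneg fun y _ => hPXY0 (x, y)
  set Q : 𝒳 → 𝒴 → ℝ := fun x y =>
    if 0 < PX x then PXY (x, y) / PX x else if y = y₀ then 1 else 0 with hQdef
  have hQ0 : ∀ x y, 0 ≤ Q x y := by
    intro x y
    simp only [hQdef]
    split
    · exact div_nonneg (hPXY0 _) (hPXnn x)
    · split <;> norm_num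
  have hrow : ∀ x, ∑ y, Q x y = 1 := by
    intro x
    simp only [hQdef]
    by_cases h : 0 < PX x
    · simp only [if_pos h]
      rw [← Finset.sum_div, ← hPX x, div_self h.ne']
    · simp only [if_neg h]
      rw [Finset.sum_ite_eq']
      simp
  have hcard : (Finset.univ.filter (fun p : 𝒳 × 𝒴 => 0 < Q p.1 p.2)).card ≤
      Fintype.card 𝒳 * Fintype.card 𝒴 := by
    calc _ ≤ (Finset.univ : Finset (𝒳 × 𝒴)).card := Finset.card_filter_le _ _
      _ = _ := by rw [Finset.card_univ, Fintype.card_prod]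
  obtain ⟨m, w, f, hm, hw0, hws, hrep⟩ :=
    key_step (Fintype.card 𝒳 * Fintype.card 𝒴) Q 1 hQ0 hrow zero_le_one hcard
  refine ⟨m, w, fun p => f p.2 p.1, ?_, hw0, hws, ?_⟩
  · have hc𝒴 : 1 ≤ Fintype.card 𝒴 := Fintype.card_pos
    obtain ⟨d, hd⟩ := Nat.exists_eq_add_of_le hc𝒴
    rw [hd] at hm ⊢
    rw [Nat.mul_add, Nat.mul_one, Nat.add_assoc, Nat.add_sub_cancel_left] at hm
    rw [Nat.add_sub_cancel_left]
    exact hm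
  · intro x y
    rw [← Finset.mul_sum, hrep x y]
    simp only [hQdef]
    by_cases h : 0 < PX x
    · rw [if_pos h, mul_div_cancel₀ _ h.ne']
    · have hx : PX x = 0 := le_antisymm (not_lt.1 h) (hPXnn x)
      rw [hx, zero_mul]
      refine (le_antisymm ?_ (hPXY0 (x, y))).symm
      calc PXY (x, y) ≤ ∑ y', PXY (x, y') :=
            Finset.single_le_sum (fun y' _ => hPXY0 (x, y')) (mem_univ y)
        _ = PX x := (hPX x).symm
        _ = 0 := hx
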